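/- Let h : [0, ∞) → ℝ be concave and differentiable on (0, ∞). Let c_u, c_v > 0, let x, y be real numbers with 0 < x ≤ y, and let k satisfy 0 ≤ k ≤ x·c_u. Then c_u·h(x − k/c_u) + c_v·h(y + k/c_v) ≤ c_u·h(x) + c_v·h(y). -/

import Mathlib

lemma concave_secant_anti {s : Set ℝ} {f : ℝ → ℝ} (hf : ConcaveOn ℝ s f)
    {a x y : ℝ} (ha : a ∈ s) (hx : x ∈ s) (hy : y ∈ s)
    (hxa : x ≠ a) (hya : y ≠ a) (hxy : x ≤ y) :
    (f y - f a) / (y - a) ≤ (f x - f a) / (x - a) := by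
  have key := hf.neg.secant_mono ha hx hy hxa hya hxy
  simp only [Pi.neg_apply] at key
  rw [← neg_le_neg_iff]
  refine le_of_le_of_eq (le_of_eq_of_le ?_ key) ?_ <;> ring

/-- Swaps do not increase the weighted potential: for concave `h` differentiable on `(0,∞)`,
`c_u, c_v > 0`, `0 < x ≤ y` and `0 ≤ k ≤ x·c_u`,
`c_u·h(x − k/c_u) + c_v·h(y + k/c_v) ≤ c_u·h(x) + c_v·h(y)`. -/
theorem weighted_swap_bound (h : ℝ → ℝ)
    (hconc : ConcaveOn ℝ (Set.Ici 0) h)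
    (hdiff : DifferentiableOn ℝ h (Set.Ioi 0))
    (cu cv : ℝ) (hcu : 0 < cu) (hcv : 0 < cv)
    (x y k : ℝ) (hx : 0 < x) (hxy : x ≤ y) (hk0 : 0 ≤ k) (hk : k ≤ x * cu) :
    cu * h (x - k / cu) + cv * h (y + k / cv) ≤ cu * h x + cv * h y := by
  rcases eq_or_lt_of_le hk0 with rfl | hkpos
  · simp
  set a := k / cu with ha_def
  set b := k / cv with hb_def
  have hapos : 0 < a := div_pos hkpos hcu
  have hbpos : 0 < b := div_pos hkpos hcv
  have hax : a ≤ x := by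
    rw [ha_def, div_le_iff₀ hcu]; linarith
  have hmem1 : x - a ∈ Set.Ici (0:ℝ) := by simp; linarith
  have hmem2 : x ∈ Set.Ici (0:ℝ) := le_of_lt hx
  have hmem3 : y ∈ Set.Ici (0:ℝ) := by simp; linarith
  have hmem4 : y + b ∈ Set.Ici (0:ℝ) := by simp; linarith
  -- slope(x-a, y+b) ≤ slope(x-a, x)
  have h1 : (h (y + b) - h (x - a)) / (y + b - (x - a)) ≤ (h x - h (x - a)) / (x - (x - a)) :=
    concave_secant_anti hconc hmem1 hmem2 hmem4 (by nlinarith) (by nlinarith) (by linarith)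
  -- slope(y, y+b) ≤ slope(x-a, y+b)
  have h2 : (h y - h (y + b)) / (y - (y + b)) ≤ (h (x - a) - h (y + b)) / (x - a - (y + b)) :=
    concave_secant_anti hconc hmem4 hmem1 hmem3 (by nlinarith) (by nlinarith) (by linarith)
  have e2 : (h y - h (y + b)) / (y - (y + b)) = (h (y + b) - h y) / b := by
    rw [show y - (y + b) = -b by ring, div_neg, ← neg_div, neg_sub]
  have e3 : (h (x - a) - h (y + b)) / (x - a - (y + b))
      = (h (y + b) - h (x - a)) / (y + b - (x - a)) := by
    rw [show x - a - (y + b) = -(y + b - (x - a)) by ring, div_neg, ← neg_div, neg_sub]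
  have e1 : (h x - h (x - a)) / (x - (x - a)) = (h x - h (x - a)) / a := by ring_nf
  have key : (h (y + b) - h y) / b ≤ (h x - h (x - a)) / a := by
    rw [← e2, ← e1]; calc _ ≤ _ := h2
                          _ = _ := e3
                          _ ≤ _ := h1
  have key' : (h (y + b) - h y) * a ≤ (h x - h (x - a)) * b := by
    rw [div_le_div_iff₀ hbpos hapos] at key; linarith
  have ea : cu * a = k := by rw [ha_def]; field_simp
  have eb : cv * b = k := by rw [hb_def]; field_simp
  have hmul := mul_le_mul_of_nonneg_left key' hkpos.le
  have c1 : cv * (h (y + b) - h y) * (a * b) = k * ((h (y + b) - h y) * a) := by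
    rw [← eb]; ring
  have c2 : cu * (h x - h (x - a)) * (a * b) = k * ((h x - h (x - a)) * b) := by
    rw [← ea]; ring
  rw [← c1, ← c2] at hmul
  have l1 : cv * (h (y + b) - h y) ≤ cu * (h x - h (x - a)) :=
    le_of_mul_le_mul_right hmul (mul_pos hapos hbpos)
  nlinarith [l1]
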